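/- Let n ≥ 1, let f and g be nonzero formal power series in n variables over ℂ (elements of MvPowerSeries (Fin n) ℂ), and let a ∈ ℝⁿ with a_i > 0 for all i. For a nonzero formal power series h, define its a-weighted order w_a(h) = inf{ Σ_i a_i·J_i : J ∈ ℕⁿ with the coefficient of z^J in h nonzero }; this infimum is attained (it is a minimum), since {J ∈ ℕⁿ : Σ_i a_i·J_i ≤ C} is finite for every C. Then f·g ≠ 0 and w_a(f·g) = w_a(f) + w_a(g). -/

import Mathlib

variable {n : ℕ}

lemma finite_wle (a : Fin n → ℝ) (ha : ∀ i, 0 < a i) (c : ℝ) :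
    {J : Fin n →₀ ℕ | (∑ i, a i * (J i : ℝ)) ≤ c}.Finite := by
  have : {J : Fin n →₀ ℕ | (∑ i, a i * (J i : ℝ)) ≤ c} ⊆
      Finsupp.equivFunOnFinite ⁻¹' (Set.pi Set.univ (fun i => Set.Iic ⌊c / a i⌋₊)) := by
    intro J hJ i _
    simp only [Set.mem_Iic, Finsupp.equivFunOnFinite_apply]
    have h1 : a i * (J i : ℝ) ≤ c := by
      have := Finset.single_le_sum (f := fun i => a i * (J i : ℝ))
        (fun i _ => mul_nonneg (ha i).le (Nat.cast_nonneg _)) (Finset.mem_univ i)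
      exact le_trans this hJ
    rw [Nat.le_floor_iff (div_nonneg (le_trans (mul_nonneg (ha i).le (Nat.cast_nonneg _)) h1) (ha i).le)]
    rw [le_div_iff₀ (ha i)]
    linarith [h1]
  exact Set.Finite.subset (Set.Finite.preimage (Equiv.injective _).injOn
    (Set.Finite.pi (fun i => Set.finite_Iic _))) this

/-- Existence of a lex-minimal minimizer of the weight on the support. -/
lemma exists_min (a : Fin n → ℝ) (ha : ∀ i, 0 < a i) (h : MvPowerSeries (Fin n) ℂ)
    (hh : h ≠ 0) :
    ∃ J₀ : Fin n →₀ ℕ, MvPowerSeries.coeff J₀ h ≠ 0 ∧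
      (∀ J, MvPowerSeries.coeff J h ≠ 0 → (∑ i, a i * (J₀ i : ℝ)) ≤ ∑ i, a i * (J i : ℝ)) ∧
      (∀ J, MvPowerSeries.coeff J h ≠ 0 →
        (∑ i, a i * (J i : ℝ)) = (∑ i, a i * (J₀ i : ℝ)) → toLex J₀ ≤ toLex J) := by
  set w : (Fin n →₀ ℕ) → ℝ := fun J => ∑ i, a i * (J i : ℝ) with hw
  obtain ⟨c, hc⟩ : ∃ c, MvPowerSeries.coeff c h ≠ 0 := by
    by_contra hcon
    push_neg at hcon
    exact hh (MvPowerSeries.ext fun J => by rw [hcon J, map_zero])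
  -- step 1: minimize w
  have hfin : {J : Fin n →₀ ℕ | MvPowerSeries.coeff J h ≠ 0 ∧ w J ≤ w c}.Finite :=
    (finite_wle a ha (w c)).subset (fun J hJ => hJ.2)
  have hne : c ∈ hfin.toFinset := by simp [hc]
  obtain ⟨J₁, hJ₁mem, hJ₁min⟩ := hfin.toFinset.exists_min_image w ⟨c, hne⟩
  rw [Set.Finite.mem_toFinset] at hJ₁mem
  have hwmin : ∀ J, MvPowerSeries.coeff J h ≠ 0 → w J₁ ≤ w J := by
    intro J hJ
    by_cases hle : w J ≤ w c
    · exact hJ₁min J (by simp [Set.Finite.mem_toFinset, hJ, hle])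
    · exact le_trans hJ₁mem.2 (le_of_not_ge hle)
  -- step 2: lex minimize among w-minimizers
  have hfin2 : {J : Fin n →₀ ℕ | MvPowerSeries.coeff J h ≠ 0 ∧ w J = w J₁}.Finite :=
    (finite_wle a ha (w J₁)).subset (fun J hJ => le_of_eq hJ.2)
  have hne2 : J₁ ∈ hfin2.toFinset := by simp [hJ₁mem.1]
  obtain ⟨J₀, hJ₀mem, hJ₀min⟩ := hfin2.toFinset.exists_min_image
    (fun J => toLex J) ⟨J₁, hne2⟩
  rw [Set.Finite.mem_toFinset] at hJ₀mem
  refine ⟨J₀, hJ₀mem.1, ?_, ?_⟩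
  · intro J hJ
    show w J₀ ≤ w J
    rw [hJ₀mem.2]; exact hwmin J hJ
  · intro J hJ hwJ
    have hwJ' : w J = w J₁ := (show w J = w J₀ from hwJ).trans hJ₀mem.2
    exact hJ₀min J (by simp only [Set.Finite.mem_toFinset]; exact ⟨hJ, hwJ'⟩)

/-- The `a`-weighted order of a formal power series `h` in `n` variables:
`w_a(h) = inf { Σ_i a_i·J_i : the coefficient of z^J in h is nonzero }`
(for nonzero `h` and positive `a` this infimum is attained and finite). -/
noncomputable def weightedOrder {n : ℕ} (a : Fin n → ℝ) (h : MvPowerSeries (Fin n) ℂ) : ℝ :=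
  sInf {x : ℝ | ∃ J : Fin n →₀ ℕ, MvPowerSeries.coeff J h ≠ 0 ∧ x = ∑ i, a i * (J i : ℝ)}

lemma w_add (a : Fin n → ℝ) (J K : Fin n →₀ ℕ) :
    (∑ i, a i * ((J + K) i : ℝ)) = (∑ i, a i * (J i : ℝ)) + ∑ i, a i * (K i : ℝ) := by
  rw [← Finset.sum_add_distrib]
  refine Finset.sum_congr rfl fun i _ => ?_
  simp [Finsupp.add_apply, Nat.cast_add, mul_add]


set_option maxHeartbeats 1000000 in
/-- **The monomial valuation is multiplicative:** for nonzero formal power series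
`f`, `g` over `ℂ` and a positive weight `a`, one has `f·g ≠ 0` and
`w_a(f·g) = w_a(f) + w_a(g)`. -/
theorem weightedOrder_mul (n : ℕ) (hn : 1 ≤ n)
    (f g : MvPowerSeries (Fin n) ℂ) (hf : f ≠ 0) (hg : g ≠ 0)
    (a : Fin n → ℝ) (ha : ∀ i, 0 < a i) :
    f * g ≠ 0 ∧ weightedOrder a (f * g) = weightedOrder a f + weightedOrder a g := by
  set w : (Fin n →₀ ℕ) → ℝ := fun J => ∑ i, a i * (J i : ℝ) with hw
  obtain ⟨J₀, hJ₀, hJ₀min, hJ₀lex⟩ := exists_min a ha f hf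
  obtain ⟨K₀, hK₀, hK₀min, hK₀lex⟩ := exists_min a ha g hg
  -- key: the coefficient of f*g at J₀+K₀ is coeff J₀ f * coeff K₀ g
  have hkey : MvPowerSeries.coeff (J₀ + K₀) (f * g) =
      MvPowerSeries.coeff J₀ f * MvPowerSeries.coeff K₀ g := by
    rw [MvPowerSeries.coeff_mul]
    refine Finset.sum_eq_single_of_mem (J₀, K₀) (by rw [Finset.HasAntidiagonal.mem_antidiagonal]) ?_
    · rintro ⟨J, K⟩ hmem hne
      rw [Finset.HasAntidiagonal.mem_antidiagonal] at hmem
      by_contra hterm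
      have hJ : MvPowerSeries.coeff J f ≠ 0 := fun h => hterm (by simp [h])
      have hK : MvPowerSeries.coeff K g ≠ 0 := fun h => hterm (by simp [h])
      have hsum : w J + w K = w J₀ + w K₀ := by
        rw [← w_add a J K, ← w_add a J₀ K₀, hmem]
      have h1 : w J₀ ≤ w J := hJ₀min J hJ
      have h2 : w K₀ ≤ w K := hK₀min K hK
      have heJ : w J = w J₀ := by linarith
      have heK : w K = w K₀ := by linarith
      have l1 : toLex J₀ ≤ toLex J := hJ₀lex J hJ heJ
      have l2 : toLex K₀ ≤ toLex K := hK₀lex K hK heK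
      have hsum2 : toLex J + toLex K = toLex J₀ + toLex K₀ := congrArg toLex hmem
      have e1 : toLex J₀ + toLex K ≤ toLex J + toLex K := add_le_add_left l1 _
      have e2 : toLex J₀ + toLex K₀ ≤ toLex J₀ + toLex K := add_le_add_right l2 _
      have q1 : toLex J₀ + toLex K = toLex J₀ + toLex K₀ :=
        le_antisymm (hsum2 ▸ e1) e2
      have : toLex K = toLex K₀ := add_left_cancel q1
      have hKK : K = K₀ := congrArg ofLex this
      have hJJ : J = J₀ := by
        have := hmem
        rw [hKK] at this
        exact add_right_cancel this
      exact hne (by rw [hJJ, hKK])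
  have hcoeff : MvPowerSeries.coeff (J₀ + K₀) (f * g) ≠ 0 := by
    rw [hkey]; exact mul_ne_zero hJ₀ hK₀
  have hfg : f * g ≠ 0 := fun h => hcoeff (by rw [h, map_zero])
  refine ⟨hfg, ?_⟩
  -- compute the three infima
  have hordf : weightedOrder a f = w J₀ := by
    refine le_antisymm (csInf_le ⟨0, ?_⟩ ⟨J₀, hJ₀, rfl⟩) (le_csInf ⟨w J₀, J₀, hJ₀, rfl⟩ ?_)
    · rintro x ⟨J, _, rfl⟩
      exact Finset.sum_nonneg fun i _ => mul_nonneg (ha i).le (Nat.cast_nonneg _)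
    · rintro x ⟨J, hJ, rfl⟩
      exact hJ₀min J hJ
  have hordg : weightedOrder a g = w K₀ := by
    refine le_antisymm (csInf_le ⟨0, ?_⟩ ⟨K₀, hK₀, rfl⟩) (le_csInf ⟨w K₀, K₀, hK₀, rfl⟩ ?_)
    · rintro x ⟨J, _, rfl⟩
      exact Finset.sum_nonneg fun i _ => mul_nonneg (ha i).le (Nat.cast_nonneg _)
    · rintro x ⟨J, hJ, rfl⟩
      exact hK₀min J hJ
  have hordfg : weightedOrder a (f * g) = w J₀ + w K₀ := by
    refine le_antisymm ?_ (le_csInf ⟨w (J₀ + K₀), J₀ + K₀, hcoeff, rfl⟩ ?_)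
    · have : w (J₀ + K₀) = w J₀ + w K₀ := w_add a J₀ K₀
      refine this ▸ csInf_le ⟨0, ?_⟩ ⟨J₀ + K₀, hcoeff, rfl⟩
      rintro x ⟨J, _, rfl⟩
      exact Finset.sum_nonneg fun i _ => mul_nonneg (ha i).le (Nat.cast_nonneg _)
    · rintro x ⟨L, hL, rfl⟩
      -- any L in the support of f*g has w L ≥ w J₀ + w K₀
      rw [MvPowerSeries.coeff_mul] at hL
      obtain ⟨⟨J, K⟩, hmem, hne⟩ := Finset.exists_ne_zero_of_sum_ne_zero hL
      rw [Finset.HasAntidiagonal.mem_antidiagonal] at hmem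
      have hJ : MvPowerSeries.coeff J f ≠ 0 := fun h => hne (by simp [h])
      have hK : MvPowerSeries.coeff K g ≠ 0 := fun h => hne (by simp [h])
      have hmem' : J + K = L := hmem
      rw [← hmem', w_add a J K]
      exact add_le_add (hJ₀min J hJ) (hK₀min K hK)
  rw [hordf, hordg, hordfg]
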